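/- Let ρ be a bipartite density operator on H_A ⊗ H_B with Schmidt number at most k (i.e., ρ is a convex combination of pure states of Schmidt rank ≤ k). Then the operator R_k(ρ) = k ρ_A ⊗ I_B − ρ is positive semidefinite. -/

import Mathlib

open Matrix Kronecker ComplexOrder

/-- Partial trace over the second factor. -/
noncomputable def ptraceB (dA dB : ℕ) (ρ : Matrix (Fin dA × Fin dB) (Fin dA × Fin dB) ℂ) :
    Matrix (Fin dA) (Fin dA) ℂ :=
  fun a a' => ∑ b, ρ (a, b) (a', b)

/-- `ρ` has Schmidt number at most `k`: it is a nonnegative combination of pure states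
each of Schmidt rank at most `k` (the Schmidt rank of a pure state being the rank of
the matrix of its coefficients). -/
noncomputable def HasSchmidtNumberLE (dA dB : ℕ)
    (ρ : Matrix (Fin dA × Fin dB) (Fin dA × Fin dB) ℂ) (k : ℕ) : Prop :=
  ∃ (n : ℕ) (c : Fin n → ℝ) (v : Fin n → (Fin dA × Fin dB → ℂ)),
    (∀ i, 0 ≤ c i) ∧
    ρ = ∑ i, ((c i : ℂ)) • Matrix.vecMulVec (v i) (star (v i)) ∧
    ∀ i, (Matrix.of fun a b => v i (a, b)).rank ≤ k

private lemma swap3 {α β γ : Type*} [Fintype α] [Fintype β] [Fintype γ]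
    (f : α → β → γ → ℂ) :
    ∑ a, ∑ b, ∑ c, f a b c = ∑ c, ∑ a, ∑ b, f a b c :=
  calc ∑ a, ∑ b, ∑ c, f a b c
      = ∑ a, ∑ c, ∑ b, f a b c :=
        Finset.sum_congr rfl fun a _ => Finset.sum_comm
    _ = ∑ c, ∑ a, ∑ b, f a b c := Finset.sum_comm

private lemma exists_factor {dA dB k : ℕ} (M : Matrix (Fin dA) (Fin dB) ℂ) (h : M.rank ≤ k) :
    ∃ (r : ℕ), r ≤ k ∧ ∃ (A : Matrix (Fin dA) (Fin r) ℂ) (B : Matrix (Fin r) (Fin dB) ℂ),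
      (∀ a c, M a c = ∑ j, A a j * B j c) ∧
      (∀ i j, (∑ c, B i c * (starRingEnd ℂ) (B j c)) = if i = j then 1 else 0) := by
  classical
  set E := EuclideanSpace ℂ (Fin dB)
  let e : (Fin dB → ℂ) ≃ₗ[ℂ] E := (WithLp.linearEquiv 2 ℂ (Fin dB → ℂ)).symm
  set K : Submodule ℂ E := Submodule.span ℂ (Set.range fun a => e (M a)) with hK
  have hrank : M.rank = Module.finrank ℂ K := by
    rw [M.rank_eq_finrank_span_row]
    have : K = Submodule.map (e : (Fin dB → ℂ) →ₗ[ℂ] E) (Submodule.span ℂ (Set.range M)) := by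
      rw [Submodule.map_span, hK]
      congr 1
      exact Set.range_comp _ M
    rw [this]
    exact (LinearEquiv.finrank_map_eq e _).symm
  set r := Module.finrank ℂ K with hr
  refine ⟨r, by omega, ?_⟩
  let b : OrthonormalBasis (Fin r) ℂ K := stdOrthonormalBasis ℂ K
  have hmem : ∀ a, e (M a) ∈ K := fun a =>
    Submodule.subset_span ⟨a, rfl⟩
  let κ : Fin dA → K := fun a => ⟨e (M a), hmem a⟩
  refine ⟨fun a j => b.repr (κ a) j, fun j c => ((b j : E) : Fin dB → ℂ) c, ?_, ?_⟩
  · intro a c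
    have h1 : ∑ j, b.repr (κ a) j • b j = κ a := b.sum_repr (κ a)
    have h2 : ((κ a : E) : Fin dB → ℂ) c = M a c := rfl
    rw [← h2]
    have hE : ((κ a : E)) = ∑ j, b.repr (κ a) j • (b j : E) := by
      conv_lhs => rw [← h1]
      push_cast
      rfl
    calc ((κ a : E) : Fin dB → ℂ) c
        = ((∑ j, b.repr (κ a) j • (b j : E) : E) : Fin dB → ℂ) c := by rw [hE]
      _ = ∑ j, (b.repr (κ a) j • ((b j : E) : Fin dB → ℂ)) c := by
          rw [WithLp.ofLp_sum, Finset.sum_apply]; rfl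
      _ = ∑ j, b.repr (κ a) j * ((b j : E) : Fin dB → ℂ) c := rfl
  · intro i j
    have horth := b.orthonormal
    have h1 : (inner ℂ (b j : E) (b i : E) : ℂ) = if j = i then 1 else 0 := by
      rw [← Submodule.coe_inner]
      exact orthonormal_iff_ite.mp horth j i
    rw [PiLp.inner_apply] at h1
    calc (∑ c, ((b i : E) : Fin dB → ℂ) c * (starRingEnd ℂ) (((b j : E) : Fin dB → ℂ) c))
        = ∑ c, (starRingEnd ℂ) ((b j : E) c) * ((b i : E)) c := by
          refine Finset.sum_congr rfl fun c _ => mul_comm _ _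
      _ = if j = i then 1 else 0 := by
          rw [← h1]
          exact Finset.sum_congr rfl fun c _ => by simp [RCLike.inner_apply, mul_comm]
      _ = if i = j then 1 else 0 := by simp [eq_comm]

private lemma pure_key (dA dB k : ℕ) (v : Fin dA × Fin dB → ℂ)
    (h : (Matrix.of fun a b => v (a, b)).rank ≤ k) :
    ((k : ℂ) • (ptraceB dA dB (Matrix.vecMulVec v (star v)) ⊗ₖ
        (1 : Matrix (Fin dB) (Fin dB) ℂ)) - Matrix.vecMulVec v (star v)).PosSemidef := by
  classical
  obtain ⟨r, hrk, A, B, hMAB, hB⟩ := exists_factor _ h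
  have hv : ∀ a c, v (a, c) = ∑ j, A a j * B j c := fun a c => hMAB a c
  set W : Matrix (Fin dA) (Fin dA) ℂ := ptraceB dA dB (Matrix.vecMulVec v (star v)) with hWdef
  have hWapp : ∀ a a', W a a' = ∑ c, v (a, c) * (starRingEnd ℂ) (v (a', c)) := by
    intro a a'
    simp [hWdef, ptraceB, Matrix.vecMulVec_apply, Complex.star_def]
  have hW : W.IsHermitian := by
    unfold Matrix.IsHermitian
    ext a a'
    rw [Matrix.conjTranspose_apply, hWapp, hWapp, star_sum]
    refine Finset.sum_congr rfl fun c _ => ?_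
    simp only [star_mul', RCLike.star_def, Complex.conj_conj]
    ring
  have h1 : ((k : ℂ) • (W ⊗ₖ (1 : Matrix (Fin dB) (Fin dB) ℂ))).IsHermitian := by
    unfold Matrix.IsHermitian
    rw [Matrix.conjTranspose_smul]
    have e1 : star ((k : ℕ) : ℂ) = ((k : ℕ) : ℂ) := by simp
    rw [e1]
    congr 1
    ext ⟨a, b⟩ ⟨a', b'⟩
    simp only [Matrix.conjTranspose_apply, Matrix.kroneckerMap_apply, Matrix.one_apply,
      star_mul', apply_ite, star_one, star_zero]
    rw [hW.apply]
    by_cases hbb : b = b' <;> simp [hbb, eq_comm]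
  have h2 : (Matrix.vecMulVec v (star v)).IsHermitian := by
    unfold Matrix.IsHermitian
    ext p q
    simp [Matrix.conjTranspose_apply, Matrix.vecMulVec_apply, mul_comm]
  refine Matrix.posSemidef_iff_dotProduct_mulVec.mpr ⟨h1.sub h2, ?_⟩
  intro x
  set Y : Fin r → Fin dB → ℂ := fun j b => ∑ a, (starRingEnd ℂ) (A a j) * x (a, b) with hYdef
  set z : Fin dB → Fin dB → ℂ := fun c b => ∑ a, (starRingEnd ℂ) (v (a, c)) * x (a, b) with hzdef
  set s : ℂ := ∑ p, (starRingEnd ℂ) (v p) * x p with hsdef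
  set cc : Fin r → ℂ := fun j => ∑ b, (starRingEnd ℂ) (B j b) * Y j b with hccdef
  -- quadratic form of the Kronecker part
  have hQ : star x ⬝ᵥ ((W ⊗ₖ (1 : Matrix (Fin dB) (Fin dB) ℂ)) *ᵥ x)
      = ∑ c, ∑ b, (starRingEnd ℂ) (z c b) * z c b := by
    have step1 : star x ⬝ᵥ ((W ⊗ₖ (1 : Matrix (Fin dB) (Fin dB) ℂ)) *ᵥ x)
        = ∑ a, ∑ b, (starRingEnd ℂ) (x (a, b)) * ∑ a', W a a' * x (a', b) := by
      simp only [dotProduct, Matrix.mulVec, Matrix.kroneckerMap_apply,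
        Fintype.sum_prod_type, Pi.star_apply, Complex.star_def, Matrix.one_apply,
        mul_ite, mul_one, mul_zero, ite_mul, zero_mul, Finset.sum_ite_eq,
        Finset.mem_univ, if_true]
    rw [step1, Finset.sum_comm]
    have inner1 : ∀ b, ∑ a, (starRingEnd ℂ) (x (a, b)) * ∑ a', W a a' * x (a', b)
        = ∑ c, (starRingEnd ℂ) (z c b) * z c b := by
      intro b
      have e1 : ∀ a, (starRingEnd ℂ) (x (a, b)) * ∑ a', W a a' * x (a', b)
          = ∑ a', ∑ c, (v (a, c) * (starRingEnd ℂ) (x (a, b))) *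
              ((starRingEnd ℂ) (v (a', c)) * x (a', b)) := by
        intro a
        rw [Finset.mul_sum]
        refine Finset.sum_congr rfl fun a' _ => ?_
        rw [hWapp, Finset.sum_mul, Finset.mul_sum]
        refine Finset.sum_congr rfl fun c _ => by ring
      rw [Finset.sum_congr rfl fun a _ => e1 a, swap3]
      refine Finset.sum_congr rfl fun c _ => ?_
      have hconj : (starRingEnd ℂ) (z c b) = ∑ a, v (a, c) * (starRingEnd ℂ) (x (a, b)) := by
        rw [hzdef]
        simp only [_root_.map_sum, _root_.map_mul, Complex.conj_conj]
      rw [hconj, hzdef, Finset.sum_mul_sum]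
    rw [Finset.sum_congr rfl fun b _ => inner1 b, Finset.sum_comm]
  -- rewrite z in terms of Y using orthonormality of the rows of B
  have hzB : ∀ c b, z c b = ∑ j, (starRingEnd ℂ) (B j c) * Y j b := by
    intro c b
    calc z c b = ∑ a, (starRingEnd ℂ) (∑ j, A a j * B j c) * x (a, b) := by
          refine Finset.sum_congr rfl fun a _ => by rw [← hv a c]
      _ = ∑ a, ∑ j, (starRingEnd ℂ) (B j c) * ((starRingEnd ℂ) (A a j) * x (a, b)) := by
          refine Finset.sum_congr rfl fun a _ => ?_
          rw [_root_.map_sum, Finset.sum_mul]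
          refine Finset.sum_congr rfl fun j _ => by rw [_root_.map_mul]; ring
      _ = ∑ j, ∑ a, (starRingEnd ℂ) (B j c) * ((starRingEnd ℂ) (A a j) * x (a, b)) :=
          Finset.sum_comm
      _ = ∑ j, (starRingEnd ℂ) (B j c) * Y j b := by
          refine Finset.sum_congr rfl fun j _ => (Finset.mul_sum _ _ _).symm
  have hinner : ∀ b, ∑ c, (starRingEnd ℂ) (z c b) * z c b
      = ∑ j, (starRingEnd ℂ) (Y j b) * Y j b := by
    intro b
    calc ∑ c, (starRingEnd ℂ) (z c b) * z c b
        = ∑ c, ∑ j, ∑ j', (B j c * (starRingEnd ℂ) (Y j b)) *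
            ((starRingEnd ℂ) (B j' c) * Y j' b) := by
          refine Finset.sum_congr rfl fun c _ => ?_
          have hconj : (starRingEnd ℂ) (z c b) = ∑ j, B j c * (starRingEnd ℂ) (Y j b) := by
            rw [hzB c b, _root_.map_sum]
            refine Finset.sum_congr rfl fun j _ => by rw [_root_.map_mul]; simp
          rw [hconj, hzB c b, Finset.sum_mul_sum]
      _ = ∑ j, ∑ j', ∑ c, (B j c * (starRingEnd ℂ) (Y j b)) *
            ((starRingEnd ℂ) (B j' c) * Y j' b) := (swap3 _).symm
      _ = ∑ j, ∑ j', (∑ c, B j c * (starRingEnd ℂ) (B j' c)) *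
            ((starRingEnd ℂ) (Y j b) * Y j' b) := by
          refine Finset.sum_congr rfl fun j _ => Finset.sum_congr rfl fun j' _ => ?_
          rw [Finset.sum_mul]
          refine Finset.sum_congr rfl fun c _ => by ring
      _ = ∑ j, (starRingEnd ℂ) (Y j b) * Y j b := by
          refine Finset.sum_congr rfl fun j _ => ?_
          rw [Finset.sum_congr rfl fun j' _ => by rw [hB j j']]
          simp [ite_mul, Finset.sum_ite_eq]
  have hzY : ∑ c, ∑ b, (starRingEnd ℂ) (z c b) * z c b
      = ∑ j, ∑ b, (starRingEnd ℂ) (Y j b) * Y j b := by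
    calc ∑ c, ∑ b, (starRingEnd ℂ) (z c b) * z c b
        = ∑ b, ∑ c, (starRingEnd ℂ) (z c b) * z c b := Finset.sum_comm
      _ = ∑ b, ∑ j, (starRingEnd ℂ) (Y j b) * Y j b := Finset.sum_congr rfl fun b _ => hinner b
      _ = ∑ j, ∑ b, (starRingEnd ℂ) (Y j b) * Y j b := Finset.sum_comm
  -- quadratic form of the pure state part
  have hP : star x ⬝ᵥ (Matrix.vecMulVec v (star v) *ᵥ x) = (starRingEnd ℂ) s * s := by
    have hconj : (starRingEnd ℂ) s = ∑ p, v p * (starRingEnd ℂ) (x p) := by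
      rw [hsdef, map_sum]
      refine Finset.sum_congr rfl fun p _ => by rw [_root_.map_mul]; simp
    rw [hconj, hsdef, Finset.sum_mul_sum]
    simp only [dotProduct, Matrix.mulVec, Matrix.vecMulVec_apply, Pi.star_apply,
      Complex.star_def]
    refine Finset.sum_congr rfl fun p _ => ?_
    rw [Finset.mul_sum]
    refine Finset.sum_congr rfl fun q _ => by ring
  -- s as a sum of the cc j
  have hs : s = ∑ j, cc j := by
    calc s = ∑ a, ∑ b, (starRingEnd ℂ) (v (a, b)) * x (a, b) := Fintype.sum_prod_type _
      _ = ∑ a, ∑ b, ∑ j, (starRingEnd ℂ) (B j b) * ((starRingEnd ℂ) (A a j) * x (a, b)) := by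
          refine Finset.sum_congr rfl fun a _ => Finset.sum_congr rfl fun b _ => ?_
          rw [hv a b, map_sum, Finset.sum_mul]
          refine Finset.sum_congr rfl fun j _ => by rw [_root_.map_mul]; ring
      _ = ∑ j, ∑ a, ∑ b, (starRingEnd ℂ) (B j b) * ((starRingEnd ℂ) (A a j) * x (a, b)) :=
          swap3 _
      _ = ∑ j, ∑ b, ∑ a, (starRingEnd ℂ) (B j b) * ((starRingEnd ℂ) (A a j) * x (a, b)) :=
          Finset.sum_congr rfl fun j _ => Finset.sum_comm
      _ = ∑ j, cc j := by
          refine Finset.sum_congr rfl fun j _ => Finset.sum_congr rfl fun b _ => ?_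
          exact (Finset.mul_sum _ _ _).symm
  -- the main identity
  have hmain : star x ⬝ᵥ (((k : ℂ) • (W ⊗ₖ (1 : Matrix (Fin dB) (Fin dB) ℂ)) -
        Matrix.vecMulVec v (star v)) *ᵥ x)
      = (k : ℂ) * (∑ j, ∑ b, (starRingEnd ℂ) (Y j b) * Y j b) - (starRingEnd ℂ) s * s := by
    rw [Matrix.sub_mulVec, dotProduct_sub, Matrix.smul_mulVec,
      dotProduct_smul, hQ, hzY, hP, smul_eq_mul]
  rw [hmain]
  -- reduce to a real inequality
  have econj : ∀ w : ℂ, (starRingEnd ℂ) w * w = ((Complex.normSq w : ℝ) : ℂ) := fun w => by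
    rw [mul_comm, Complex.mul_conj]
  have hform : (k : ℂ) * (∑ j, ∑ b, (starRingEnd ℂ) (Y j b) * Y j b) - (starRingEnd ℂ) s * s
      = (((k : ℝ) * (∑ j, ∑ b, Complex.normSq (Y j b)) - Complex.normSq s : ℝ) : ℂ) := by
    simp only [econj]
    push_cast
    ring
  rw [hform]
  rw [Complex.zero_le_real]
  -- the real inequality
  have hT0 : (0 : ℝ) ≤ ∑ j, ∑ b, Complex.normSq (Y j b) :=
    Finset.sum_nonneg fun j _ => Finset.sum_nonneg fun b _ => Complex.normSq_nonneg _
  have hBrow : ∀ j, ∑ b, Complex.normSq (B j b) = 1 := by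
    intro j
    have h := hB j j
    rw [if_pos rfl] at h
    have h' : ∑ b, ((Complex.normSq (B j b) : ℝ) : ℂ) = 1 := by
      rw [← h]
      refine Finset.sum_congr rfl fun b _ => (Complex.mul_conj _).symm
    exact_mod_cast h'
  have hcc : ∀ j, Complex.normSq (cc j) ≤ ∑ b, Complex.normSq (Y j b) := by
    intro j
    have habs : ‖cc j‖ ≤ ∑ b, ‖B j b‖ * ‖Y j b‖ := by
      refine le_trans (norm_sum_le _ _) ?_
      refine Finset.sum_le_sum fun b _ => ?_
      rw [norm_mul, Complex.norm_conj]
    have hsq : ‖cc j‖ ^ 2 ≤ (∑ b, ‖B j b‖ * ‖Y j b‖) ^ 2 :=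
      pow_le_pow_left₀ (norm_nonneg _) habs 2
    have hcs := Finset.sum_mul_sq_le_sq_mul_sq Finset.univ
      (fun b => ‖B j b‖) (fun b => ‖Y j b‖)
    have hBsq : ∑ b, ‖B j b‖ ^ 2 = 1 := by
      rw [← hBrow j]
      exact Finset.sum_congr rfl fun b _ => Complex.sq_norm _
    have hYsq : ∑ b, ‖Y j b‖ ^ 2 = ∑ b, Complex.normSq (Y j b) :=
      Finset.sum_congr rfl fun b _ => Complex.sq_norm _
    calc Complex.normSq (cc j) = ‖cc j‖ ^ 2 := (Complex.sq_norm _).symm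
      _ ≤ (∑ b, ‖B j b‖ * ‖Y j b‖) ^ 2 := hsq
      _ ≤ (∑ b, ‖B j b‖ ^ 2) * ∑ b, ‖Y j b‖ ^ 2 := hcs
      _ = ∑ b, Complex.normSq (Y j b) := by rw [hBsq, hYsq, one_mul]
  have habs_s : ‖s‖ ≤ ∑ j, ‖cc j‖ := by
    rw [hs]
    exact norm_sum_le _ _
  have hcs2 : (∑ j, ‖cc j‖) ^ 2 ≤ (r : ℝ) * ∑ j, ‖cc j‖ ^ 2 := by
    have := Finset.sum_mul_sq_le_sq_mul_sq Finset.univ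
      (fun _ : Fin r => (1 : ℝ)) (fun j => ‖cc j‖)
    simpa [Finset.card_univ] using this
  have hsum : Complex.normSq s ≤ (k : ℝ) * ∑ j, ∑ b, Complex.normSq (Y j b) := by
    have h3 : ∑ j, ‖cc j‖ ^ 2 ≤ ∑ j, ∑ b, Complex.normSq (Y j b) := by
      refine Finset.sum_le_sum fun j _ => ?_
      rw [Complex.sq_norm]
      exact hcc j
    calc Complex.normSq s = ‖s‖ ^ 2 := (Complex.sq_norm _).symm
      _ ≤ (∑ j, ‖cc j‖) ^ 2 :=
          pow_le_pow_left₀ (norm_nonneg _) habs_s 2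
      _ ≤ (r : ℝ) * ∑ j, ‖cc j‖ ^ 2 := hcs2
      _ ≤ (r : ℝ) * ∑ j, ∑ b, Complex.normSq (Y j b) := by
          refine mul_le_mul_of_nonneg_left h3 (by positivity)
      _ ≤ (k : ℝ) * ∑ j, ∑ b, Complex.normSq (Y j b) := by
          refine mul_le_mul_of_nonneg_right ?_ hT0
          exact_mod_cast hrk
  linarith

private lemma psd_smul_real {n : Type*} [Fintype n] {M : Matrix n n ℂ} (hM : M.PosSemidef)
    (c : ℝ) (hc : 0 ≤ c) : ((c : ℂ) • M).PosSemidef := by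
  rw [Matrix.posSemidef_iff_dotProduct_mulVec]
  constructor
  · unfold Matrix.IsHermitian
    rw [Matrix.conjTranspose_smul, hM.1]
    congr 1
    simp
  · intro x
    rw [Matrix.smul_mulVec, dotProduct_smul, smul_eq_mul]
    have h1 : (0 : ℂ) ≤ (c : ℂ) := Complex.zero_le_real.mpr hc
    exact mul_nonneg h1 (hM.dotProduct_mulVec_nonneg x)

theorem stmt19 (dA dB k : ℕ) (hk : 0 < k)
    (ρ : Matrix (Fin dA × Fin dB) (Fin dA × Fin dB) ℂ)
    (hρpsd : ρ.PosSemidef) (htr : ρ.trace = 1)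
    (hSN : HasSchmidtNumberLE dA dB ρ k) :
    ((k : ℂ) • (ptraceB dA dB ρ ⊗ₖ (1 : Matrix (Fin dB) (Fin dB) ℂ)) - ρ).PosSemidef := by
  classical
  obtain ⟨n, c, v, hc, hρ, hrank⟩ := hSN
  subst hρ
  have hlin : (k : ℂ) • (ptraceB dA dB (∑ i, ((c i : ℂ)) • Matrix.vecMulVec (v i) (star (v i)))
        ⊗ₖ (1 : Matrix (Fin dB) (Fin dB) ℂ)) -
        (∑ i, ((c i : ℂ)) • Matrix.vecMulVec (v i) (star (v i)))
      = ∑ i, ((c i : ℂ)) •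
          ((k : ℂ) • (ptraceB dA dB (Matrix.vecMulVec (v i) (star (v i))) ⊗ₖ
            (1 : Matrix (Fin dB) (Fin dB) ℂ)) - Matrix.vecMulVec (v i) (star (v i))) := by
    have hpt : ptraceB dA dB (∑ i, ((c i : ℂ)) • Matrix.vecMulVec (v i) (star (v i)))
        = ∑ i, ((c i : ℂ)) • ptraceB dA dB (Matrix.vecMulVec (v i) (star (v i))) := by
      ext a a'
      simp only [ptraceB, Matrix.sum_apply, Matrix.smul_apply, smul_eq_mul, Finset.mul_sum]
      exact Finset.sum_comm
    rw [hpt]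
    ext p q
    simp only [Matrix.sub_apply, Matrix.smul_apply, Matrix.sum_apply, smul_eq_mul,
      Matrix.kroneckerMap_apply, Finset.mul_sum, Finset.sum_mul]
    rw [← Finset.sum_sub_distrib]
    refine Finset.sum_congr rfl fun i _ => ?_
    ring
  rw [hlin]
  have hterm : ∀ i, (((c i : ℂ)) •
      ((k : ℂ) • (ptraceB dA dB (Matrix.vecMulVec (v i) (star (v i))) ⊗ₖ
        (1 : Matrix (Fin dB) (Fin dB) ℂ)) - Matrix.vecMulVec (v i) (star (v i)))).PosSemidef :=
    fun i => psd_smul_real (pure_key dA dB k (v i) (hrank i)) (c i) (hc i)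
  exact Finset.sum_induction _ Matrix.PosSemidef
    (fun a b ha hb => ha.add hb) Matrix.PosSemidef.zero (fun i _ => hterm i)
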